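/- arXiv:2106.14831 — 5 statements merged into one kernel-verified Lean document; each statement's English description precedes it below -/
import Mathlib

section
/- The Minkowski sum of two hybrid zonotopes Z = ⟨G_z^c, G_z^b, c_z, A_z^c, A_z^b, b_z⟩ and W = ⟨G_w^c, G_w^b, c_w, A_w^c, A_w^b, b_w⟩ in ℝ^n is the hybrid zonotope ⟨[G_z^c G_w^c], [G_z^b G_w^b], c_z + c_w, diag(A_z^c, A_w^c), diag(A_z^b, A_w^b), (b_z; b_w)⟩, where the generator matrices are concatenated horizontally and the constraint matrices are block-diagonal. -/
/-- Hybrid zonotope ⟨Gc, Gb, c, Ac, Ab, b⟩. -/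
def hybridZonotope {n ng nb nc : Type*} [Fintype ng] [Fintype nb]
    (Gc : Matrix n ng ℝ) (Gb : Matrix n nb ℝ) (c : n → ℝ)
    (Ac : Matrix nc ng ℝ) (Ab : Matrix nc nb ℝ) (b : nc → ℝ) : Set (n → ℝ) :=
  {z | ∃ ξc : ng → ℝ, ∃ ξb : nb → ℝ, (∀ i, |ξc i| ≤ 1) ∧ (∀ i, ξb i = 1 ∨ ξb i = -1) ∧
    Ac.mulVec ξc + Ab.mulVec ξb = b ∧ z = Gc.mulVec ξc + Gb.mulVec ξb + c}

theorem hybridZonotope_minkowskiSum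
    {n ngz ngw nbz nbw ncz ncw : ℕ}
    (Gzc : Matrix (Fin n) (Fin ngz) ℝ) (Gzb : Matrix (Fin n) (Fin nbz) ℝ) (cz : Fin n → ℝ)
    (Azc : Matrix (Fin ncz) (Fin ngz) ℝ) (Azb : Matrix (Fin ncz) (Fin nbz) ℝ) (bz : Fin ncz → ℝ)
    (Gwc : Matrix (Fin n) (Fin ngw) ℝ) (Gwb : Matrix (Fin n) (Fin nbw) ℝ) (cw : Fin n → ℝ)
    (Awc : Matrix (Fin ncw) (Fin ngw) ℝ) (Awb : Matrix (Fin ncw) (Fin nbw) ℝ) (bw : Fin ncw → ℝ) :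
    {x | ∃ z ∈ hybridZonotope Gzc Gzb cz Azc Azb bz,
         ∃ w ∈ hybridZonotope Gwc Gwb cw Awc Awb bw, x = z + w} =
      hybridZonotope (Matrix.fromCols Gzc Gwc) (Matrix.fromCols Gzb Gwb) (cz + cw)
        (Matrix.fromBlocks Azc 0 0 Awc) (Matrix.fromBlocks Azb 0 0 Awb)
        (Sum.elim bz bw) := by
  ext x
  simp only [Set.mem_setOf_eq, hybridZonotope]
  constructor
  · rintro ⟨z, ⟨ξc₁, ξb₁, h1, h2, h3, rfl⟩, w, ⟨ξc₂, ξb₂, h4, h5, h6, rfl⟩, rfl⟩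
    refine ⟨Sum.elim ξc₁ ξc₂, Sum.elim ξb₁ ξb₂, ?_, ?_, ?_, ?_⟩
    · rintro (i|i) <;> [exact h1 i; exact h4 i]
    · rintro (i|i) <;> [exact h2 i; exact h5 i]
    · funext i
      cases i with
      | inl i =>
        simp [Matrix.fromBlocks_mulVec, ← h3]
      | inr i =>
        simp [Matrix.fromBlocks_mulVec, ← h6]
    · simp [Matrix.fromCols_mulVec_sumElim]
      abel
  · rintro ⟨ξc, ξb, h1, h2, h3, rfl⟩
    refine ⟨_, ⟨ξc ∘ Sum.inl, ξb ∘ Sum.inl, fun i => h1 _, fun i => h2 _, ?_, rfl⟩,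
      _, ⟨ξc ∘ Sum.inr, ξb ∘ Sum.inr, fun i => h1 _, fun i => h2 _, ?_, rfl⟩, ?_⟩
    · funext i
      have := congrFun h3 (Sum.inl i)
      simpa [Matrix.fromBlocks_mulVec] using this
    · funext i
      have := congrFun h3 (Sum.inr i)
      simpa [Matrix.fromBlocks_mulVec] using this
    · have : ξc = Sum.elim (ξc ∘ Sum.inl) (ξc ∘ Sum.inr) := by
        funext i; cases i <;> rfl
      rw [this]
      have hb : ξb = Sum.elim (ξb ∘ Sum.inl) (ξb ∘ Sum.inr) := by
        funext i; cases i <;> rfl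
      rw [hb, Matrix.fromCols_mulVec_sumElim, Matrix.fromCols_mulVec_sumElim]
      simp only [Sum.elim_comp_inl, Sum.elim_comp_inr]
      abel
end

section
/- The generalized intersection of hybrid zonotopes is a hybrid zonotope: for Z = ⟨G_z^c, G_z^b, c_z, A_z^c, A_z^b, b_z⟩ ⊂ ℝ^n, Y = ⟨G_y^c, G_y^b, c_y, A_y^c, A_y^b, b_y⟩ ⊂ ℝ^m, and R ∈ ℝ^{m×n}, the set Z ∩_R Y = {z ∈ Z : Rz ∈ Y} equals the hybrid zonotope ⟨[G_z^c 0], [G_z^b 0], c_z, A, B, d⟩ where A = [[A_z^c, 0]; [0, A_y^c]; [RG_z^c, −G_y^c]], B = [[A_z^b, 0]; [0, A_y^b]; [RG_z^b, −G_y^b]], and d = (b_z; b_y; c_y − R c_z). -/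
private lemma fromColumns_zero_mulVec {n n1 n2 : Type*} [Fintype n1] [Fintype n2]
    (A : Matrix n n1 ℝ) (ξ : n1 ⊕ n2 → ℝ) :
    (Matrix.fromCols A (0 : Matrix n n2 ℝ)).mulVec ξ = A.mulVec (ξ ∘ Sum.inl) := by
  have h : ξ = Sum.elim (ξ ∘ Sum.inl) (ξ ∘ Sum.inr) := (Sum.elim_comp_inl_inr ξ).symm
  rw [h, Matrix.fromCols_mulVec_sumElim, Matrix.zero_mulVec, add_zero]
  simp

theorem hybridZonotope_generalizedIntersection
    {m n ngz ngy nbz nby ncz ncy : ℕ} (R : Matrix (Fin m) (Fin n) ℝ)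
    (Gzc : Matrix (Fin n) (Fin ngz) ℝ) (Gzb : Matrix (Fin n) (Fin nbz) ℝ) (cz : Fin n → ℝ)
    (Azc : Matrix (Fin ncz) (Fin ngz) ℝ) (Azb : Matrix (Fin ncz) (Fin nbz) ℝ) (bz : Fin ncz → ℝ)
    (Gyc : Matrix (Fin m) (Fin ngy) ℝ) (Gyb : Matrix (Fin m) (Fin nby) ℝ) (cy : Fin m → ℝ)
    (Ayc : Matrix (Fin ncy) (Fin ngy) ℝ) (Ayb : Matrix (Fin ncy) (Fin nby) ℝ) (by' : Fin ncy → ℝ) :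
    {z ∈ hybridZonotope Gzc Gzb cz Azc Azb bz |
        R.mulVec z ∈ hybridZonotope Gyc Gyb cy Ayc Ayb by'} =
      hybridZonotope
        (Matrix.fromCols Gzc (0 : Matrix (Fin n) (Fin ngy) ℝ))
        (Matrix.fromCols Gzb (0 : Matrix (Fin n) (Fin nby) ℝ))
        cz
        (Matrix.fromRows (Matrix.fromBlocks Azc 0 0 Ayc)
          (Matrix.fromCols (R * Gzc) (-Gyc)))
        (Matrix.fromRows (Matrix.fromBlocks Azb 0 0 Ayb)
          (Matrix.fromCols (R * Gzb) (-Gyb)))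
        (Sum.elim (Sum.elim bz by') (cy - R.mulVec cz)) := by
  ext z
  simp only [Set.mem_setOf_eq, hybridZonotope, Set.mem_sep_iff]
  constructor
  · rintro ⟨⟨ξc, ξb, hξc, hξb, hA, hz⟩, ⟨ηc, ηb, hηc, hηb, hB, hw⟩⟩
    refine ⟨Sum.elim ξc ηc, Sum.elim ξb ηb, ?_, ?_, ?_, ?_⟩
    · rintro (i | i) <;> [exact hξc i; exact hηc i]
    · rintro (i | i) <;> [exact hξb i; exact hηb i]
    · funext i
      rcases i with (i | i) | i
      · simpa [Matrix.fromRows_mulVec, Matrix.fromBlocks_mulVec, Pi.add_apply]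
          using congrFun hA i
      · simpa [Matrix.fromRows_mulVec, Matrix.fromBlocks_mulVec, Pi.add_apply]
          using congrFun hB i
      · have h2 : R.mulVec z = (R * Gzc).mulVec ξc + (R * Gzb).mulVec ξb + R.mulVec cz := by
          rw [hz]
          simp [Matrix.mulVec_add, Matrix.mulVec_mulVec]
        simp only [Matrix.fromRows_mulVec, Matrix.fromCols_mulVec_sumElim,
          Sum.elim_inr, Pi.add_apply, Matrix.neg_mulVec, Pi.neg_apply, Pi.sub_apply]
        have h1 := congrFun hw i
        have h3 := congrFun h2 i
        simp only [Pi.add_apply] at h1 h3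
        linarith
    · rw [hz]
      rw [fromColumns_zero_mulVec, fromColumns_zero_mulVec]
      simp
  · rintro ⟨ξ, η, hξ, hη, hA, hz⟩
    have hzv : z = Gzc.mulVec (ξ ∘ Sum.inl) + Gzb.mulVec (η ∘ Sum.inl) + cz := by
      rw [hz, fromColumns_zero_mulVec, fromColumns_zero_mulVec]
    have hξeq : ξ = Sum.elim (ξ ∘ Sum.inl) (ξ ∘ Sum.inr) := (Sum.elim_comp_inl_inr ξ).symm
    have hηeq : η = Sum.elim (η ∘ Sum.inl) (η ∘ Sum.inr) := (Sum.elim_comp_inl_inr η).symm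
    constructor
    · refine ⟨ξ ∘ Sum.inl, η ∘ Sum.inl, fun i => hξ _, fun i => hη _, ?_, hzv⟩
      funext i
      have h := congrFun hA (Sum.inl (Sum.inl i))
      rw [hξeq, hηeq] at h
      simpa [Matrix.fromRows_mulVec, Matrix.fromBlocks_mulVec] using h
    · refine ⟨ξ ∘ Sum.inr, η ∘ Sum.inr, fun i => hξ _, fun i => hη _, ?_, ?_⟩
      · funext i
        have h := congrFun hA (Sum.inl (Sum.inr i))
        rw [hξeq, hηeq] at h
        simpa [Matrix.fromRows_mulVec, Matrix.fromBlocks_mulVec] using h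
      · funext i
        have h := congrFun hA (Sum.inr i)
        rw [hξeq, hηeq] at h
        simp only [Matrix.fromRows_mulVec, Matrix.fromCols_mulVec_sumElim, Sum.elim_inr,
          Pi.add_apply, Matrix.neg_mulVec, Pi.neg_apply, Pi.sub_apply, Sum.elim_comp_inl,
          Sum.elim_comp_inr] at h
        have hR : R.mulVec z = (R * Gzc).mulVec (ξ ∘ Sum.inl) + (R * Gzb).mulVec (η ∘ Sum.inl)
            + R.mulVec cz := by
          rw [hzv]; simp [Matrix.mulVec_add, Matrix.mulVec_mulVec]
        have hRi := congrFun hR i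
        simp only [Pi.add_apply] at hRi ⊢
        linarith
end

section
/- The one-step forward reachable set of an MLD system is a hybrid zonotope computed by set operations: given sets R_k ⊂ ℝ^n (states), U (inputs), W (auxiliary variables), dynamics x₊ = Ax + B_u u + B_w w + B_aff subject to E_x x + E_u u + E_w w ≤ E_aff, define V = [B_u; E_u]·U ⊕ [B_w; E_w]·W ⊕ {(B_aff; 0)} and H = {h ∈ ℝ^{n_e} : h ≤ E_aff}. Then the set {Ax + B_u u + B_w w + B_aff : x ∈ R_k, u ∈ U, w ∈ W, E_x x + E_u u + E_w w ≤ E_aff} equals [I_n 0]·(([A; E_x]·R_k ⊕ V) ∩_{[0 I_{n_e}]} H). -/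
theorem mld_one_step_reachable_set
    {n nu nw ne : ℕ}
    (A : Matrix (Fin n) (Fin n) ℝ) (Bu : Matrix (Fin n) (Fin nu) ℝ)
    (Bw : Matrix (Fin n) (Fin nw) ℝ) (Baff : Fin n → ℝ)
    (Ex : Matrix (Fin ne) (Fin n) ℝ) (Eu : Matrix (Fin ne) (Fin nu) ℝ)
    (Ew : Matrix (Fin ne) (Fin nw) ℝ) (Eaff : Fin ne → ℝ)
    (Rk : Set (Fin n → ℝ)) (U : Set (Fin nu → ℝ)) (W : Set (Fin nw → ℝ))
    -- V = [Bu; Eu]·U ⊕ [Bw; Ew]·W ⊕ {(Baff; 0)}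
    (V : Set (Fin n ⊕ Fin ne → ℝ))
    (hV : V = {v | ∃ u ∈ U, ∃ w ∈ W,
        v = Sum.elim (Bu.mulVec u) (Eu.mulVec u)
          + Sum.elim (Bw.mulVec w) (Ew.mulVec w)
          + Sum.elim Baff 0}) :
    {x' | ∃ x ∈ Rk, ∃ u ∈ U, ∃ w ∈ W,
        (∀ i, (Ex.mulVec x + Eu.mulVec u + Ew.mulVec w) i ≤ Eaff i) ∧
        x' = A.mulVec x + Bu.mulVec u + Bw.mulVec w + Baff} =
    (fun y : Fin n ⊕ Fin ne → ℝ => fun i : Fin n => y (Sum.inl i)) ''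
      {y | (∃ x ∈ Rk, ∃ v ∈ V, y = Sum.elim (A.mulVec x) (Ex.mulVec x) + v) ∧
           (∀ j : Fin ne, y (Sum.inr j) ≤ Eaff j)} := by
  subst hV
  ext x'
  simp only [Set.mem_setOf_eq, Set.mem_image]
  constructor
  · rintro ⟨x, hx, u, hu, w, hw, hle, rfl⟩
    refine ⟨Sum.elim (A.mulVec x) (Ex.mulVec x)
        + (Sum.elim (Bu.mulVec u) (Eu.mulVec u)
          + Sum.elim (Bw.mulVec w) (Ew.mulVec w)
          + Sum.elim Baff 0), ⟨⟨x, hx, _, ⟨u, hu, w, hw, rfl⟩, rfl⟩, ?_⟩, ?_⟩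
    · intro j
      simp only [Pi.add_apply, Sum.elim_inr, Pi.zero_apply]; have := hle j; simp only [Pi.add_apply] at this; linarith
    · funext i
      simp
      ring
  · rintro ⟨y, ⟨⟨x, hx, _, ⟨u, hu, w, hw, rfl⟩, rfl⟩, hle⟩, rfl⟩
    refine ⟨x, hx, u, hu, w, hw, fun i => ?_, ?_⟩
    · simp only [Pi.add_apply]; have := hle i; simp only [Pi.add_apply, Sum.elim_inr, Pi.zero_apply] at this; linarith
    · funext i
      simp
      ring
end

section
/- A constant binary factor can be substituted: let Z_h = ⟨G^c, G^b, c, A^c, A^b, b⟩ be a hybrid zonotope such that every feasible binary vector ξ^b has first coordinate equal to a fixed value s ∈ {-1, 1}. Then Z_h equals the hybrid zonotope ⟨G^c, G^b_{2:}, c + s·g^{(b,1)}, A^c, A^b_{2:}, b − s·a^{(b,1)}⟩ obtained by removing the first binary generator column g^{(b,1)} and first binary constraint column a^{(b,1)} and shifting the center and constraint vector. -/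
lemma mulVec_sum_split {m β : Type*} [Fintype β]
    (M : Matrix m (Unit ⊕ β) ℝ) (v : Unit ⊕ β → ℝ) :
    M.mulVec v = (M.submatrix id Sum.inr).mulVec (v ∘ Sum.inr)
      + (v (Sum.inl ())) • (fun r => M r (Sum.inl ())) := by
  funext r
  simp [Matrix.mulVec, dotProduct, Fintype.sum_sum_type, mul_comm, add_comm]

theorem hybridZonotope_removeConstantBinaryFactor
    {n nb ng nc : ℕ}
    (Gc : Matrix (Fin n) (Fin ng) ℝ) (Gb : Matrix (Fin n) (Unit ⊕ Fin nb) ℝ) (c : Fin n → ℝ)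
    (Ac : Matrix (Fin nc) (Fin ng) ℝ) (Ab : Matrix (Fin nc) (Unit ⊕ Fin nb) ℝ) (b : Fin nc → ℝ)
    (s : ℝ) (hs : s = 1 ∨ s = -1)
    -- every feasible binary vector has its first coordinate equal to s
    (hconst : ∀ ξb : Unit ⊕ Fin nb → ℝ, (∀ i, ξb i = 1 ∨ ξb i = -1) →
      (∃ ξc : Fin ng → ℝ, (∀ i, |ξc i| ≤ 1) ∧ Ac.mulVec ξc + Ab.mulVec ξb = b) →
      ξb (Sum.inl ()) = s) :
    hybridZonotope Gc Gb c Ac Ab b =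
      hybridZonotope Gc (Gb.submatrix id Sum.inr)
        (c + s • (fun r => Gb r (Sum.inl ())))
        Ac (Ab.submatrix id Sum.inr)
        (b - s • (fun r => Ab r (Sum.inl ()))) := by
  ext z
  constructor
  · rintro ⟨ξc, ξb, hξc, hξb, heq, hz⟩
    have hfirst : ξb (Sum.inl ()) = s := hconst ξb hξb ⟨ξc, hξc, heq⟩
    refine ⟨ξc, ξb ∘ Sum.inr, hξc, fun i => hξb (Sum.inr i), ?_, ?_⟩
    · have := heq
      rw [mulVec_sum_split Ab ξb, hfirst] at this
      funext r
      have h := congrFun this r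
      simp only [Pi.add_apply, Pi.smul_apply, Pi.sub_apply, smul_eq_mul] at h ⊢
      linarith
    · rw [mulVec_sum_split Gb ξb, hfirst] at hz
      funext r
      have h := congrFun hz r
      simp only [Pi.add_apply, Pi.smul_apply, smul_eq_mul] at h ⊢
      linarith
  · rintro ⟨ξc, ξb', hξc, hξb', heq, hz⟩
    refine ⟨ξc, Sum.elim (fun _ => s) ξb', hξc, ?_, ?_, ?_⟩
    · rintro (⟨⟩ | i)
      · exact hs
      · exact hξb' i
    · rw [mulVec_sum_split Ab]
      have h1 : (Sum.elim (fun _ => s) ξb' : Unit ⊕ Fin nb → ℝ) ∘ Sum.inr = ξb' := rfl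
      rw [h1]
      funext r
      have h := congrFun heq r
      simp only [Pi.add_apply, Pi.smul_apply, Pi.sub_apply, smul_eq_mul, Sum.elim_inl] at h ⊢
      linarith
    · rw [mulVec_sum_split Gb]
      have h1 : (Sum.elim (fun _ => s) ξb' : Unit ⊕ Fin nb → ℝ) ∘ Sum.inr = ξb' := rfl
      rw [h1]
      funext r
      have h := congrFun hz r
      simp only [Pi.add_apply, Pi.smul_apply, smul_eq_mul, Sum.elim_inl] at h ⊢
      linarith
end

section
/- The Minkowski sum identity for hybrid zonotopes is exact (both inclusions): with X denoting the hybrid zonotope ⟨[G_z^c G_w^c], [G_z^b G_w^b], c_z + c_w, diag(A_z^c, A_w^c), diag(A_z^b, A_w^b), (b_z; b_w)⟩, one has both Z ⊕ W ⊆ X and X ⊆ Z ⊕ W, where the second inclusion requires splitting any feasible factor vector of X into feasible factors for Z and W separately. -/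
theorem hybridZonotope_minkowskiSum_both_inclusions
    {n ngz ngw nbz nbw ncz ncw : ℕ}
    (Gzc : Matrix (Fin n) (Fin ngz) ℝ) (Gzb : Matrix (Fin n) (Fin nbz) ℝ) (cz : Fin n → ℝ)
    (Azc : Matrix (Fin ncz) (Fin ngz) ℝ) (Azb : Matrix (Fin ncz) (Fin nbz) ℝ) (bz : Fin ncz → ℝ)
    (Gwc : Matrix (Fin n) (Fin ngw) ℝ) (Gwb : Matrix (Fin n) (Fin nbw) ℝ) (cw : Fin n → ℝ)
    (Awc : Matrix (Fin ncw) (Fin ngw) ℝ) (Awb : Matrix (Fin ncw) (Fin nbw) ℝ) (bw : Fin ncw → ℝ) :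
    {x | ∃ z ∈ hybridZonotope Gzc Gzb cz Azc Azb bz,
         ∃ w ∈ hybridZonotope Gwc Gwb cw Awc Awb bw, x = z + w} ⊆
      hybridZonotope (Matrix.fromCols Gzc Gwc) (Matrix.fromCols Gzb Gwb) (cz + cw)
        (Matrix.fromBlocks Azc 0 0 Awc) (Matrix.fromBlocks Azb 0 0 Awb) (Sum.elim bz bw) ∧
    hybridZonotope (Matrix.fromCols Gzc Gwc) (Matrix.fromCols Gzb Gwb) (cz + cw)
        (Matrix.fromBlocks Azc 0 0 Awc) (Matrix.fromBlocks Azb 0 0 Awb) (Sum.elim bz bw) ⊆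
      {x | ∃ z ∈ hybridZonotope Gzc Gzb cz Azc Azb bz,
           ∃ w ∈ hybridZonotope Gwc Gwb cw Awc Awb bw, x = z + w} := by

  constructor
  · rintro x ⟨z, ⟨ξc1, ξb1, h1, h2, h3, h4⟩, w, ⟨ξc2, ξb2, h5, h6, h7, h8⟩, rfl⟩
    refine ⟨Sum.elim ξc1 ξc2, Sum.elim ξb1 ξb2, ?_, ?_, ?_, ?_⟩
    · rintro (i|i)
      · simpa using h1 i
      · simpa using h5 i
    · rintro (i|i)
      · simpa using h2 i
      · simpa using h6 i
    · ext (i|i) <;>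
        simp [Matrix.fromBlocks_mulVec, Matrix.mulVec_zero, Sum.elim_comp_inl,
          Sum.elim_comp_inr, ← h3, ← h7]
    · rw [h4, h8]
      simp only [Matrix.fromCols_mulVec_sumElim]
      abel
  · rintro x ⟨ξc, ξb, h1, h2, h3, h4⟩
    have h3' := congrArg (fun f => f ∘ Sum.inl) h3
    have h3'' := congrArg (fun f => f ∘ Sum.inr) h3
    simp only [Matrix.fromBlocks_mulVec, Sum.elim_comp_inl, Sum.elim_comp_inr,
      Matrix.mulVec_zero] at h3' h3''
    refine ⟨_, ⟨ξc ∘ Sum.inl, ξb ∘ Sum.inl, fun i => h1 _, fun i => h2 _, ?_, rfl⟩,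
      _, ⟨ξc ∘ Sum.inr, ξb ∘ Sum.inr, fun i => h1 _, fun i => h2 _, ?_, rfl⟩, ?_⟩
    · ext i; have := congrFun h3' i; simpa using this
    · ext i; have := congrFun h3'' i; simpa using this
    · rw [h4]
      have : ξc = Sum.elim (ξc ∘ Sum.inl) (ξc ∘ Sum.inr) := by ext (i|i) <;> rfl
      have hb : ξb = Sum.elim (ξb ∘ Sum.inl) (ξb ∘ Sum.inr) := by ext (i|i) <;> rfl
      rw [this, hb]
      simp only [Matrix.fromCols_mulVec_sumElim]
      ext i; simp; ring
end
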